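/- Let X₁, X₂, S be d×d matrices with ρ = X*X, X = [[X₁, SX₁],[0, X₂]], satisfying the SPPT condition X₁*(SS* − S*S)X₁ = 0. Let X₁ = UΛV* be a singular value decomposition with Λ = diag(Σ, 0) and write U*SU = [[S₁,S₂],[S₃,S₄]] conformally. If the column space of S is contained in the column space of X₁, then S₃ = 0, S₄ = 0, S₂ = 0 and S₁ is normal; consequently S is normal. -/

import Mathlib

open Matrix

theorem stmt15 {d : ℕ} (X₁ X₂ S U V Λ : Matrix (Fin d) (Fin d) ℂ) (r : ℕ)
    (hSPPT : X₁ᴴ * (S * Sᴴ - Sᴴ * S) * X₁ = 0)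
    (hU : Uᴴ * U = 1) (hU' : U * Uᴴ = 1)
    (hV : Vᴴ * V = 1) (hV' : V * Vᴴ = 1)
    (hΛ : Λ.IsDiag)
    (hΛr : ∀ i : Fin d, Λ i i ≠ 0 ↔ (i : ℕ) < r)
    (hSVD : X₁ = U * Λ * Vᴴ)
    (hrange : LinearMap.range (Matrix.toLin' S) ≤ LinearMap.range (Matrix.toLin' X₁)) :
    (∀ i j : Fin d, r ≤ (i : ℕ) → (Uᴴ * S * U) i j = 0) ∧
    (∀ i j : Fin d, r ≤ (j : ℕ) → (Uᴴ * S * U) i j = 0) ∧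
    S * Sᴴ = Sᴴ * S := by
  set T := Uᴴ * S * U with hT
  have hUc : ∀ A : Matrix (Fin d) (Fin d) ℂ, U * (Uᴴ * A) = A := fun A => by
    rw [← Matrix.mul_assoc, hU', Matrix.one_mul]
  have hUc' : ∀ A : Matrix (Fin d) (Fin d) ℂ, Uᴴ * (U * A) = A := fun A => by
    rw [← Matrix.mul_assoc, hU, Matrix.one_mul]
  have hVc' : ∀ A : Matrix (Fin d) (Fin d) ℂ, Vᴴ * (V * A) = A := fun A => by
    rw [← Matrix.mul_assoc, hV, Matrix.one_mul]
  -- rows ≥ r of T vanish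
  have hrow : ∀ i j : Fin d, r ≤ (i : ℕ) → T i j = 0 := by
    intro i j hi
    have hΛi : Λ i i = 0 := by
      by_contra h
      exact absurd ((hΛr i).mp h) (not_lt.mpr hi)
    have hUS : ∀ k, (Uᴴ * S) i k = 0 := by
      intro k
      obtain ⟨y, hy⟩ := hrange ⟨Pi.single k 1, rfl⟩
      have hcolk : S *ᵥ Pi.single k 1 = fun m => S m k := by
        funext m
        simp [Matrix.mulVec, dotProduct, Pi.single_apply]
      have h1 : (Uᴴ * S) i k = (Uᴴ *ᵥ (X₁ *ᵥ y)) i := by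
        rw [Matrix.toLin'_apply, Matrix.toLin'_apply] at hy
        rw [hy, hcolk]
        simp [Matrix.mul_apply, Matrix.mulVec, dotProduct]
      rw [h1, Matrix.mulVec_mulVec]
      have hUX : Uᴴ * X₁ = Λ * Vᴴ := by
        rw [hSVD, ← Matrix.mul_assoc, ← Matrix.mul_assoc, hU, Matrix.one_mul]
      rw [hUX]
      have : ∀ m, (Λ * Vᴴ) i m = 0 := by
        intro m
        rw [Matrix.mul_apply]
        apply Finset.sum_eq_zero
        intro b _
        rcases eq_or_ne i b with rfl | hib
        · rw [hΛi, zero_mul]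
        · rw [hΛ hib, zero_mul]
      simp [Matrix.mulVec, dotProduct, this]
    rw [hT, Matrix.mul_apply]
    apply Finset.sum_eq_zero
    intro b _
    rw [hUS b, zero_mul]
  -- conjugated commutator
  have hD : T * Tᴴ - Tᴴ * T = Uᴴ * (S * Sᴴ - Sᴴ * S) * U := by
    simp only [hT, conjTranspose_mul, conjTranspose_conjTranspose, Matrix.mul_sub,
      Matrix.sub_mul, Matrix.mul_assoc, hUc]
  have hkey : Λᴴ * (T * Tᴴ - Tᴴ * T) * Λ = 0 := by
    rw [hD]
    have h2 : Vᴴ * (X₁ᴴ * (S * Sᴴ - Sᴴ * S) * X₁) * V = 0 := by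
      rw [hSPPT]; simp
    rw [hSVD] at h2
    simp only [conjTranspose_mul, conjTranspose_conjTranspose, Matrix.mul_assoc, hVc', hV,
      Matrix.mul_one] at h2
    simp only [Matrix.mul_assoc]
    exact h2
  have hentry : ∀ (M : Matrix (Fin d) (Fin d) ℂ) (i j : Fin d),
      (Λᴴ * M * Λ) i j = star (Λ i i) * M i j * Λ j j := by
    intro M i j
    rw [Matrix.mul_apply, Finset.sum_eq_single j]
    · congr 1
      rw [Matrix.mul_apply, Finset.sum_eq_single i]
      · rw [conjTranspose_apply]
      · intro a _ ha
        rw [conjTranspose_apply, hΛ ha]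
        simp
      · simp
    · intro b _ hb
      rw [hΛ hb, mul_zero]
    · simp
  have hE : ∀ i j : Fin d, (i : ℕ) < r → (j : ℕ) < r → (T * Tᴴ - Tᴴ * T) i j = 0 := by
    intro i j hi hj
    have h0 : (Λᴴ * (T * Tᴴ - Tᴴ * T) * Λ) i j = 0 := by rw [hkey]; rfl
    rw [hentry] at h0
    have hΛi : Λ i i ≠ 0 := (hΛr i).mpr hi
    have hΛj : Λ j j ≠ 0 := (hΛr j).mpr hj
    have hsi : star (Λ i i) ≠ 0 := star_ne_zero.mpr hΛi
    rcases mul_eq_zero.mp h0 with h | h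
    · rcases mul_eq_zero.mp h with h' | h'
      · exact absurd h' hsi
      · exact h'
    · exact absurd h hΛj
  -- columns ≥ r of T vanish
  set a : Fin d → Fin d → ℝ := fun i k => Complex.normSq (T i k) with ha
  have hdiag : ∀ i : Fin d, (i : ℕ) < r → ∑ k, a i k = ∑ k, a k i := by
    intro i hi
    have h0 := hE i i hi hi
    rw [Matrix.sub_apply, sub_eq_zero, Matrix.mul_apply, Matrix.mul_apply] at h0
    have hL : (∑ k, T i k * Tᴴ k i) = ((∑ k, a i k : ℝ) : ℂ) := by
      push_cast
      apply Finset.sum_congr rfl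
      intro k _
      rw [conjTranspose_apply, ha]
      exact (Complex.mul_conj (T i k)).trans (by push_cast; ring)
    have hR : (∑ k, Tᴴ i k * T k i) = ((∑ k, a k i : ℝ) : ℂ) := by
      push_cast
      apply Finset.sum_congr rfl
      intro k _
      rw [conjTranspose_apply, ha, mul_comm]
      exact (Complex.mul_conj (T k i)).trans (by push_cast; ring)
    have := hL.symm.trans (h0.trans hR)
    exact_mod_cast this
  set P : Finset (Fin d) := Finset.univ.filter (fun i : Fin d => (i : ℕ) < r) with hP
  have h1 : ∑ i ∈ P, ∑ k, a i k = ∑ i, ∑ k, a i k := by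
    apply Finset.sum_subset (Finset.subset_univ P)
    intro i _ hiP
    have hi : r ≤ (i : ℕ) := by
      by_contra h
      exact hiP (Finset.mem_filter.mpr ⟨Finset.mem_univ i, not_le.mp h⟩)
    apply Finset.sum_eq_zero
    intro k _
    rw [ha]
    simp [hrow i k hi]
  have h2 : ∑ i ∈ P, ∑ k, a i k = ∑ i ∈ P, ∑ k, a k i :=
    Finset.sum_congr rfl fun i hi => hdiag i (Finset.mem_filter.mp hi).2
  have h3 : ∑ i, ∑ k, a i k = ∑ i, ∑ k, a k i := Finset.sum_comm
  have h4 : ∑ i ∈ Finset.univ \ P, ∑ k, a k i = 0 := by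
    have h5 : ∑ i ∈ Finset.univ \ P, ∑ k, a k i + ∑ i ∈ P, ∑ k, a k i = ∑ i, ∑ k, a k i :=
      Finset.sum_sdiff (Finset.subset_univ P)
    have := h3 ▸ h1 ▸ h2
    linarith [h5, this]
  have hcol : ∀ i j : Fin d, r ≤ (j : ℕ) → T i j = 0 := by
    intro i j hj
    have hjP : j ∈ Finset.univ \ P := by
      simp [hP, not_lt.mpr hj]
    have hnn : ∀ x ∈ Finset.univ \ P, (0:ℝ) ≤ ∑ k, a k x := fun x _ =>
      Finset.sum_nonneg fun k _ => Complex.normSq_nonneg _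
    have hzero : ∑ k, a k j = 0 :=
      (Finset.sum_eq_zero_iff_of_nonneg hnn).mp h4 j hjP
    have : a i j = 0 :=
      (Finset.sum_eq_zero_iff_of_nonneg fun k _ => Complex.normSq_nonneg _).mp hzero i
        (Finset.mem_univ i)
    exact Complex.normSq_eq_zero.mp this
  -- T is normal
  have hN : T * Tᴴ - Tᴴ * T = 0 := by
    ext i j
    by_cases hi : (i : ℕ) < r
    · by_cases hj : (j : ℕ) < r
      · exact hE i j hi hj
      · have hj' : r ≤ (j : ℕ) := not_lt.mp hj
        simp only [Matrix.sub_apply, Matrix.mul_apply, conjTranspose_apply, Matrix.zero_apply]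
        rw [Finset.sum_eq_zero fun k _ => by rw [hrow j k hj']; simp,
          Finset.sum_eq_zero fun k _ => by rw [hcol k j hj', mul_zero], sub_zero]
    · have hi' : r ≤ (i : ℕ) := not_lt.mp hi
      simp only [Matrix.sub_apply, Matrix.mul_apply, conjTranspose_apply, Matrix.zero_apply]
      rw [Finset.sum_eq_zero fun k _ => by rw [hrow i k hi', zero_mul],
        Finset.sum_eq_zero fun k _ => by rw [hcol k i hi', star_zero, zero_mul], sub_zero]
  refine ⟨fun i j hi => hrow i j hi, fun i j hj => hcol i j hj, ?_⟩
  have := hD ▸ hN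
  have h6 : U * (Uᴴ * (S * Sᴴ - Sᴴ * S) * U) * Uᴴ = 0 := by rw [this, Matrix.mul_zero, Matrix.zero_mul]
  have h8 : U * (Uᴴ * (S * Sᴴ - Sᴴ * S) * U) * Uᴴ = S * Sᴴ - Sᴴ * S := by
    simp only [Matrix.mul_assoc, hUc, hU', Matrix.mul_one]
  rw [h8] at h6
  exact sub_eq_zero.mp h6
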